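/- Let k ∈ ℕ and suppose property (C_n) holds for every n ∈ {1, 2, …, k+1}. Then for every admissible block a_1⋯a_k ∈ 𝒟^k, the block a_1⋯a_k 0 (of length k+1) is admissible; moreover V_{k+1}(ξ;0) is the disjoint union, over all admissible blocks a_1⋯a_k ∈ 𝒟^k, of the sets ξ^{−(k+1)}𝒳 + Σ_{j=1}^{k} ξ^{−j} a_j. -/

import Mathlib

/-- The digit map of the `(ξ, 𝓛, 𝒳)`-expansion: `d(z)` is the unique element of the
lattice `L` with `ξ z − d(z) ∈ X`, extracted from the fundamental-domain property. -/
noncomputable def cdgF (L : AddSubgroup ℂ) (X : Set ℂ)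
    (hfund : ∀ w : ℂ, ∃! d, d ∈ L ∧ w - d ∈ X) (ξ : ℂ) (z : ℂ) : ℂ :=
  (hfund (ξ * z)).choose

/-- The transformation `𝕋 z = ξ z − d(z)`. -/
noncomputable def cTF (L : AddSubgroup ℂ) (X : Set ℂ)
    (hfund : ∀ w : ℂ, ∃! d, d ∈ L ∧ w - d ∈ X) (ξ : ℂ) (z : ℂ) : ℂ :=
  ξ * z - cdgF L X hfund ξ z

/-- `cdigF … n z` is the `(n+1)`-th digit `d_{n+1}(z) = d(𝕋^[n] z)`. -/
noncomputable def cdigF (L : AddSubgroup ℂ) (X : Set ℂ)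
    (hfund : ∀ w : ℂ, ∃! d, d ∈ L ∧ w - d ∈ X) (ξ : ℂ) (n : ℕ) (z : ℂ) : ℂ :=
  cdgF L X hfund ξ ((cTF L X hfund ξ)^[n] z)

/-- A block `a_0 ⋯ a_{m-1}` is admissible if it occurs as a block of consecutive
digits of the expansion of some `z ∈ X`. -/
def cAdmF (L : AddSubgroup ℂ) (X : Set ℂ)
    (hfund : ∀ w : ℂ, ∃! d, d ∈ L ∧ w - d ∈ X) (ξ : ℂ) (m : ℕ) (a : ℕ → ℂ) : Prop :=
  ∃ z ∈ X, ∃ m₀ : ℕ, ∀ j < m, a j = cdigF L X hfund ξ (m₀ + j) z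

/-- Property `(C_n)`: for every admissible block `a_1 ⋯ a_{n-1}`,
`ξ^{-n} 𝒳 + ξ^{-(n-1)} a_{n-1} + ⋯ + ξ^{-1} a_1 ⊆ 𝒳`.
(For `n = 1` this is `(C_1) : ξ^{-1} 𝒳 ⊆ 𝒳`.) -/
def propCF (L : AddSubgroup ℂ) (X : Set ℂ)
    (hfund : ∀ w : ℂ, ∃! d, d ∈ L ∧ w - d ∈ X) (ξ : ℂ) (n : ℕ) : Prop :=
  ∀ a : ℕ → ℂ, cAdmF L X hfund ξ (n - 1) a →
    ∀ x ∈ X, ξ ^ (-(n : ℤ)) * x + ∑ j ∈ Finset.range (n - 1), ξ ^ (-((j : ℤ) + 1)) * a j ∈ X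


section Aux
variable (L : AddSubgroup ℂ) (X : Set ℂ) (hfund : ∀ w : ℂ, ∃! d, d ∈ L ∧ w - d ∈ X) (ξ : ℂ)

lemma cdgF_mem (z : ℂ) : cdgF L X hfund ξ z ∈ L := ((hfund (ξ * z)).choose_spec.1).1

lemma cTF_mem (z : ℂ) : cTF L X hfund ξ z ∈ X := ((hfund (ξ * z)).choose_spec.1).2

lemma cdgF_eq {z d : ℂ} (hd : d ∈ L) (hx : ξ * z - d ∈ X) : cdgF L X hfund ξ z = d :=
  ((hfund (ξ * z)).choose_spec.2 d ⟨hd, hx⟩).symm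

end Aux

lemma chain (ξ : ℂ) (hξ0 : ξ ≠ 0) (L : AddSubgroup ℂ) (X : Set ℂ) (h0 : (0 : ℂ) ∈ X)
    (hfund : ∀ w : ℂ, ∃! d, d ∈ L ∧ w - d ∈ X) (k : ℕ)
    (hC : ∀ n : ℕ, 1 ≤ n → n ≤ k + 1 → propCF L X hfund ξ n)
    (a : ℕ → ℂ) (ha : cAdmF L X hfund ξ k a) (x : ℂ) (hx : x ∈ X) :
    (ξ ^ (-((k : ℤ) + 1)) * x + ∑ j ∈ Finset.range k, ξ ^ (-((j : ℤ) + 1)) * a j) ∈ X ∧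
    (∀ n, n < k → cdigF L X hfund ξ n
        (ξ ^ (-((k : ℤ) + 1)) * x + ∑ j ∈ Finset.range k, ξ ^ (-((j : ℤ) + 1)) * a j) = a n) ∧
    cdigF L X hfund ξ k
        (ξ ^ (-((k : ℤ) + 1)) * x + ∑ j ∈ Finset.range k, ξ ^ (-((j : ℤ) + 1)) * a j) = 0 := by
  obtain ⟨z, hz, m₀, hdig⟩ := ha
  have haL : ∀ n, n < k → a n ∈ L := by
    intro n hn
    rw [hdig n hn]
    exact cdgF_mem L X hfund ξ _
  set W : ℕ → ℂ := fun n => ξ ^ ((n : ℤ) - ((k : ℤ) + 1)) * x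
      + ∑ i ∈ Finset.range (k - n), ξ ^ (-((i : ℤ) + 1)) * a (n + i) with hW
  have hWmem : ∀ n, n ≤ k → W n ∈ X := by
    intro n hn
    have hadm : cAdmF L X hfund ξ (k + 1 - n - 1) (fun i => a (n + i)) := by
      refine ⟨z, hz, m₀ + n, fun j hj => ?_⟩
      rw [add_assoc]
      exact hdig (n + j) (by omega)
    have h := hC (k + 1 - n) (by omega) (by omega) (fun i => a (n + i)) hadm x hx
    have e2 : k + 1 - n - 1 = k - n := by omega
    have e1 : (-((k + 1 - n : ℕ) : ℤ)) = (n : ℤ) - ((k : ℤ) + 1) := by omega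
    rw [e2, e1] at h
    exact h
  have hstep : ∀ n, n < k → ξ * W n = a n + W (n + 1) := by
    intro n hn
    have ek : k - n = (k - (n + 1)) + 1 := by omega
    simp only [hW, ek, Finset.sum_range_succ']
    rw [mul_add, mul_add, Finset.mul_sum]
    have t1 : ξ * (ξ ^ ((n : ℤ) - ((k : ℤ) + 1)) * x)
        = ξ ^ (((n + 1 : ℕ) : ℤ) - ((k : ℤ) + 1)) * x := by
      have e : (((n + 1 : ℕ) : ℤ) - ((k : ℤ) + 1)) = ((n : ℤ) - ((k : ℤ) + 1)) + 1 := by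
        push_cast; ring
      rw [e, zpow_add_one₀ hξ0]; ring
    have t3 : ξ * (ξ ^ (-(((0 : ℕ) : ℤ) + 1)) * a (n + 0)) = a n := by
      have e : (-(((0 : ℕ) : ℤ) + 1)) = (-1 : ℤ) := by norm_num
      rw [e, zpow_neg_one]
      field_simp
      rfl
    have t2 : ∀ i ∈ Finset.range (k - (n + 1)),
        ξ * (ξ ^ (-(((i + 1 : ℕ) : ℤ) + 1)) * a (n + (i + 1)))
        = ξ ^ (-((i : ℤ) + 1)) * a ((n + 1) + i) := by
      intro i _
      have e : (-((i : ℤ) + 1)) = (-(((i + 1 : ℕ) : ℤ) + 1)) + 1 := by push_cast; ring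
      have e' : n + (i + 1) = (n + 1) + i := by omega
      rw [e, e', zpow_add_one₀ hξ0]; ring
    rw [t1, t3, Finset.sum_congr rfl t2]
    ring
  have hdg : ∀ n, n < k → cdgF L X hfund ξ (W n) = a n := by
    intro n hn
    refine cdgF_eq L X hfund ξ (haL n hn) ?_
    rw [hstep n hn, add_sub_cancel_left]
    exact hWmem (n + 1) (by omega)
  have hT : ∀ n, n < k → cTF L X hfund ξ (W n) = W (n + 1) := by
    intro n hn
    show ξ * W n - cdgF L X hfund ξ (W n) = W (n + 1)
    rw [hdg n hn, hstep n hn]; ring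
  have hiter : ∀ n, n ≤ k → (cTF L X hfund ξ)^[n] (W 0) = W n := by
    intro n hn
    induction n with
    | zero => rfl
    | succ n ih => rw [Function.iterate_succ_apply', ih (by omega), hT n (by omega)]
  have hW0 : ξ ^ (-((k : ℤ) + 1)) * x + ∑ j ∈ Finset.range k, ξ ^ (-((j : ℤ) + 1)) * a j
      = W 0 := by
    simp [hW]
  have hWk : ξ * W k = x := by
    have e : (k : ℤ) - ((k : ℤ) + 1) = -1 := by ring
    simp only [hW, Nat.sub_self, Finset.range_zero, Finset.sum_empty, add_zero, e,
      zpow_neg_one]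
    field_simp
  have hdgk : cdgF L X hfund ξ (W k) = 0 := by
    refine cdgF_eq L X hfund ξ (zero_mem L) ?_
    rw [hWk, sub_zero]
    exact hx
  refine ⟨by rw [hW0]; exact hWmem 0 (by omega), ?_, ?_⟩
  · intro n hn
    show cdgF L X hfund ξ ((cTF L X hfund ξ)^[n] _) = a n
    rw [hW0, hiter n (le_of_lt hn)]
    exact hdg n hn
  · show cdgF L X hfund ξ ((cTF L X hfund ξ)^[k] _) = 0
    rw [hW0, hiter k le_rfl]
    exact hdgk

lemma expand (ξ : ℂ) (hξ0 : ξ ≠ 0) (L : AddSubgroup ℂ) (X : Set ℂ)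
    (hfund : ∀ w : ℂ, ∃! d, d ∈ L ∧ w - d ∈ X) (z : ℂ) :
    ∀ n : ℕ, z = ξ ^ (-(n : ℤ)) * (cTF L X hfund ξ)^[n] z
      + ∑ j ∈ Finset.range n, ξ ^ (-((j : ℤ) + 1)) * cdigF L X hfund ξ j z := by
  intro n
  induction n with
  | zero => simp
  | succ n ih =>
    rw [Finset.sum_range_succ, Function.iterate_succ_apply']
    have hTdef : cTF L X hfund ξ ((cTF L X hfund ξ)^[n] z)
        = ξ * (cTF L X hfund ξ)^[n] z - cdigF L X hfund ξ n z := rfl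
    rw [hTdef]
    set t := (cTF L X hfund ξ)^[n] z
    set d := cdigF L X hfund ξ n z
    have e : ξ ^ (-((n : ℕ) + 1 : ℤ)) * ξ = ξ ^ (-(n : ℤ)) := by
      rw [← zpow_add_one₀ hξ0]; ring_nf
    have e2 : (-(((n + 1 : ℕ)) : ℤ)) = (-((n : ℕ) + 1 : ℤ)) := by push_cast; ring
    have e3 : (-((n : ℤ) + 1)) = (-((n : ℕ) + 1 : ℤ)) := by push_cast; ring
    rw [e2, e3, mul_sub]
    rw [show ξ ^ (-((n : ℕ) + 1 : ℤ)) * (ξ * t) = ξ ^ (-(n : ℤ)) * t by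
      rw [← mul_assoc, e]]
    conv_lhs => rw [ih]
    ring
/-- If `(C_n)` holds for all `n ∈ {1, …, k+1}`, then every admissible `k`-block extended
by the digit `0` is admissible, and `V_{k+1}(ξ;0)` is the disjoint union over admissible
`k`-blocks `a` of the translates `ξ^{-(k+1)} 𝒳 + Σ_{j=1}^k ξ^{-j} a_j`. -/
theorem stmt7 (ξ : ℂ) (hξ : 1 < ‖ξ‖) (L : AddSubgroup ℂ) (X : Set ℂ)
    (h0 : (0 : ℂ) ∈ X)
    (hfund : ∀ w : ℂ, ∃! d, d ∈ L ∧ w - d ∈ X)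
    (k : ℕ)
    (hC : ∀ n : ℕ, 1 ≤ n → n ≤ k + 1 → propCF L X hfund ξ n) :
    (∀ a : ℕ → ℂ, cAdmF L X hfund ξ k a →
        cAdmF L X hfund ξ (k + 1) (fun j => if j < k then a j else 0)) ∧
    ({z | z ∈ X ∧ cdigF L X hfund ξ k z = 0}
      = ⋃ a ∈ {a : ℕ → ℂ | cAdmF L X hfund ξ k a},
          (fun x : ℂ => ξ ^ (-((k : ℤ) + 1)) * x
            + ∑ j ∈ Finset.range k, ξ ^ (-((j : ℤ) + 1)) * a j) '' X) ∧
    (∀ a a' : ℕ → ℂ, cAdmF L X hfund ξ k a → cAdmF L X hfund ξ k a' →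
        (∃ j < k, a j ≠ a' j) →
        Disjoint
          ((fun x : ℂ => ξ ^ (-((k : ℤ) + 1)) * x
            + ∑ j ∈ Finset.range k, ξ ^ (-((j : ℤ) + 1)) * a j) '' X)
          ((fun x : ℂ => ξ ^ (-((k : ℤ) + 1)) * x
            + ∑ j ∈ Finset.range k, ξ ^ (-((j : ℤ) + 1)) * a' j) '' X)) := by
  have hξ0 : ξ ≠ 0 := by
    intro h; rw [h, norm_zero] at hξ; linarith
  refine ⟨?_, ?_, ?_⟩
  · intro a ha
    have hc := chain ξ hξ0 L X h0 hfund k hC a ha 0 h0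
    refine ⟨_, hc.1, 0, ?_⟩
    intro j hj
    simp only [zero_add]
    by_cases h : j < k
    · rw [if_pos h]
      exact (hc.2.1 j h).symm
    · have hjk : j = k := by omega
      rw [if_neg h, hjk]
      exact (hc.2.2).symm
  · ext y
    simp only [Set.mem_setOf_eq, Set.mem_iUnion, Set.mem_image]
    constructor
    · rintro ⟨hy, hdk⟩
      refine ⟨fun j => cdigF L X hfund ξ j y, ⟨y, hy, 0, fun j _ => by simp⟩,
        (cTF L X hfund ξ)^[k + 1] y, ?_, ?_⟩
      · rw [Function.iterate_succ_apply']
        exact cTF_mem L X hfund ξ _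
      · have hex := expand ξ hξ0 L X hfund y (k + 1)
        rw [Finset.sum_range_succ, hdk] at hex
        have e : (-(((k + 1 : ℕ)) : ℤ)) = -((k : ℤ) + 1) := by push_cast; ring
        rw [e, mul_zero, add_zero] at hex
        exact hex.symm
    · rintro ⟨a, ha, x, hx, rfl⟩
      have hc := chain ξ hξ0 L X h0 hfund k hC a ha x hx
      exact ⟨hc.1, hc.2.2⟩
  · intro a a' ha ha' hne
    obtain ⟨j, hj, hne⟩ := hne
    rw [Set.disjoint_left]
    rintro y ⟨x, hx, rfl⟩ ⟨x', hx', hy'⟩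
    have h1 := (chain ξ hξ0 L X h0 hfund k hC a ha x hx).2.1 j hj
    have h2 := (chain ξ hξ0 L X h0 hfund k hC a' ha' x' hx').2.1 j hj
    have hy2 : ξ ^ (-((k : ℤ) + 1)) * x' + ∑ j ∈ Finset.range k, ξ ^ (-((j : ℤ) + 1)) * a' j
        = ξ ^ (-((k : ℤ) + 1)) * x + ∑ j ∈ Finset.range k, ξ ^ (-((j : ℤ) + 1)) * a j := hy'
    rw [hy2] at h2
    exact hne (h1.symm.trans h2)
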